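/- Fix β > 0 and t > 0, and let E_β denote the Mittag-Leffler function. Then liminf_{θ → ∞} (log log E_β(θ t)) / (log θ) ≥ 1/β. -/

import Mathlib

set_option maxHeartbeats 1000000

open Real Filter

/-- The Mittag-Leffler function with parameter `β`: `E_β(z) = ∑ n, z^n / Γ(nβ + 1)`. -/
noncomputable def mittagLeffler (β z : ℝ) : ℝ := ∑' n : ℕ, z ^ n / Real.Gamma (n * β + 1)

lemma half_le_gamma {x : ℝ} (hx : 1 ≤ x) : 1/2 ≤ Real.Gamma x := by
  rcases le_total 2 x with h2 | h2
  · have h := Real.Gamma_strictMonoOn_Ici.monotoneOn (Set.self_mem_Ici) h2 h2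
    rw [Real.Gamma_two] at h
    linarith
  · have hx0 : (0:ℝ) < x := by linarith
    have hG3 : Real.Gamma 3 = 2 := by
      have := Real.Gamma_nat_eq_factorial 2
      norm_num at this
      convert this using 2 <;> norm_num
    have h3x : (0:ℝ) < 3 - x := by linarith
    have ha : (0:ℝ) ≤ 1/(3-x) := by positivity
    have hb : (0:ℝ) ≤ (2-x)/(3-x) := div_nonneg (by linarith) (by linarith)
    have hab : 1/(3-x) + (2-x)/(3-x) = 1 := by field_simp; ring
    have hconv := Real.convexOn_log_Gamma.2 (Set.mem_Ioi.2 hx0)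
      (Set.mem_Ioi.2 (by norm_num : (0:ℝ) < 3)) ha hb hab
    have hcomb : (1/(3-x)) • x + ((2-x)/(3-x)) • (3:ℝ) = 2 := by
      simp only [smul_eq_mul]
      rw [div_mul_eq_mul_div, div_mul_eq_mul_div, ← add_div, div_eq_iff h3x.ne']; ring
    rw [hcomb] at hconv
    simp only [Function.comp_apply, smul_eq_mul, Real.Gamma_two, Real.log_one, hG3] at hconv
    -- hconv : 0 ≤ (1/(3-x)) * log (Gamma x) + ((2-x)/(3-x)) * log 2
    have hlog2 : (0:ℝ) ≤ Real.log 2 := Real.log_nonneg (by norm_num)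
    have key : -Real.log 2 ≤ Real.log (Real.Gamma x) := by
      rw [div_mul_eq_mul_div, div_mul_eq_mul_div, ← add_div, le_div_iff₀ h3x] at hconv
      nlinarith
    have hGpos := Real.Gamma_pos_of_pos hx0
    have : Real.log (1/2) ≤ Real.log (Real.Gamma x) := by
      rw [one_div, Real.log_inv]; exact key
    exact (Real.log_le_log_iff (by norm_num) hGpos).mp this

lemma pow_sub_le_factorial {m k : ℕ} (h : m ≤ k) : m ^ (k - m) ≤ k.factorial := by
  induction k with
  | zero => simp
  | succ k ih =>
    rcases Nat.lt_or_ge m (k+1) with hm | hm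
    · have hmk : m ≤ k := by omega
      have : k + 1 - m = (k - m) + 1 := by omega
      rw [this, pow_succ, Nat.factorial_succ, Nat.mul_comm (k+1)]
      exact Nat.mul_le_mul (ih hmk) (Nat.le_of_lt hm)
    · have : m = k + 1 := by omega
      subst this
      simpa using Nat.succ_le_of_lt (Nat.factorial_pos (k+1))

lemma gamma_mono {x y : ℝ} (hx : 2 ≤ x) (hxy : x ≤ y) : Real.Gamma x ≤ Real.Gamma y :=
  Real.Gamma_strictMonoOn_Ici.monotoneOn hx (le_trans hx hxy) hxy

lemma floor_factorial_le_gamma {β : ℝ} (hβ : 0 < β) (n : ℕ) :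
    ((Nat.floor ((n:ℝ) * β)).factorial : ℝ) / 2 ≤ Real.Gamma ((n:ℝ) * β + 1) := by
  set x : ℝ := (n:ℝ) * β with hxdef
  have hx0 : 0 ≤ x := by positivity
  rcases lt_or_ge x 1 with h1 | h1
  · have : Nat.floor x = 0 := Nat.floor_eq_zero.2 h1
    rw [this]
    simpa using half_le_gamma (by linarith : (1:ℝ) ≤ x + 1)
  · have hfl1 : 1 ≤ Nat.floor x := Nat.le_floor (by exact_mod_cast h1)
    have h2 : (2:ℝ) ≤ (Nat.floor x : ℝ) + 1 := by
      have : (1:ℝ) ≤ (Nat.floor x : ℝ) := by exact_mod_cast hfl1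
      linarith
    have hle : ((Nat.floor x : ℝ) + 1) ≤ x + 1 := by
      have := Nat.floor_le hx0
      linarith
    have := gamma_mono h2 hle
    rw [Real.Gamma_nat_eq_factorial] at this
    linarith

lemma gamma_le_rpow {x : ℝ} (hx : 1 ≤ x) : Real.Gamma (x + 1) ≤ (x+1) ^ (x+1) := by
  have hx0 : (0:ℝ) < x := by linarith
  have hceil1 : 1 ≤ Nat.ceil x := Nat.one_le_ceil_iff.2 hx0
  have hcx : x ≤ (Nat.ceil x : ℝ) := Nat.le_ceil x
  have h1 : Real.Gamma (x+1) ≤ Real.Gamma ((Nat.ceil x : ℝ) + 1) :=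
    gamma_mono (by linarith) (by linarith)
  rw [Real.Gamma_nat_eq_factorial] at h1
  have h2 : ((Nat.ceil x).factorial : ℝ) ≤ ((Nat.ceil x : ℝ)) ^ (Nat.ceil x : ℕ) := by
    exact_mod_cast Nat.factorial_le_pow _
  have h3 : ((Nat.ceil x : ℝ)) ^ (Nat.ceil x : ℕ) = ((Nat.ceil x : ℝ)) ^ ((Nat.ceil x : ℕ) : ℝ) := by
    rw [Real.rpow_natCast]
  have hc1 : (1:ℝ) ≤ (Nat.ceil x : ℝ) := by exact_mod_cast hceil1
  have hcle : (Nat.ceil x : ℝ) ≤ x + 1 := by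
    have := Nat.ceil_lt_add_one (le_of_lt hx0)
    linarith
  have h4 : ((Nat.ceil x : ℝ)) ^ ((Nat.ceil x : ℕ) : ℝ) ≤ (x+1) ^ ((Nat.ceil x : ℕ) : ℝ) :=
    Real.rpow_le_rpow (by linarith) hcle (by positivity)
  have h5 : (x+1) ^ ((Nat.ceil x : ℕ) : ℝ) ≤ (x+1) ^ (x+1) :=
    Real.rpow_le_rpow_of_exponent_le (by linarith) hcle
  calc Real.Gamma (x+1) ≤ ((Nat.ceil x).factorial : ℝ) := h1
    _ ≤ _ := by rw [← h3] at h4; exact le_trans (le_trans h2 h4) h5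

lemma term_bound {β : ℝ} (hβ : 0 < β) {z : ℝ} (hz : 2 ≤ z) (n : ℕ)
    (hn : (⌈(2*z)^(2/β)⌉₊ + 1)^2 + ⌈((⌈(2*z)^(2/β)⌉₊:ℝ) + 1)/β⌉₊ ≤ n) :
    z ^ n / ((Nat.floor ((n:ℝ)*β)).factorial : ℝ) ≤ (1/2)^n := by
  set m : ℕ := ⌈(2*z)^(2/β)⌉₊ with hmdef
  set k : ℕ := Nat.floor ((n:ℝ)*β) with hkdef
  have h2z : (1:ℝ) ≤ 2*z := by linarith
  have h2z0 : (0:ℝ) < 2*z := by linarith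
  have hmr : (2*z)^(2/β) ≤ (m:ℝ) := Nat.le_ceil _
  have hm1 : (1:ℝ) ≤ (m:ℝ) :=
    le_trans (Real.one_le_rpow h2z (by positivity)) hmr
  have hm0 : (0:ℝ) < (m:ℝ) := by linarith
  -- n β ≥ m + 1
  have hna : ((m:ℝ) + 1) ≤ (n:ℝ) * β := by
    have h1 : (⌈((m:ℝ) + 1)/β⌉₊ : ℝ) ≤ (n:ℝ) := by
      exact_mod_cast Nat.cast_le.2 (le_trans (Nat.le_add_left _ _) hn)
    have h2 : ((m:ℝ)+1)/β ≤ (n:ℝ) := le_trans (Nat.le_ceil _) h1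
    calc ((m:ℝ)+1) = ((m:ℝ)+1)/β * β := by field_simp
      _ ≤ (n:ℝ) * β := by apply mul_le_mul_of_nonneg_right h2 hβ.le
  have hmk : m ≤ k := Nat.le_floor (by linarith)
  have hk : (n:ℝ) * β - 1 ≤ (k:ℝ) := by
    have := Nat.lt_floor_add_one ((n:ℝ)*β)
    push_cast at this ⊢
    linarith
  -- m^β ≥ (2z)^2
  have hmb : (2*z)^(2:ℕ) ≤ (m:ℝ) ^ β := by
    have h1 : ((2*z)^(2/β)) ^ β ≤ (m:ℝ) ^ β :=
      Real.rpow_le_rpow (by positivity) hmr hβ.le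
    rw [← Real.rpow_natCast (2*z) 2]
    rwa [← Real.rpow_mul h2z0.le, div_mul_cancel₀ _ (ne_of_gt hβ)] at h1
    
  -- m^(m+1) ≤ (2z)^n
  have hmm : (m:ℝ)^(m+1) ≤ (2*z)^n := by
    have hnat : m^(m+1) ≤ 4^n := by
      have h1 : m ≤ 4^(m+1) := by
        have a1 : m ≤ 2^m := (Nat.lt_two_pow_self).le
        have a2 : (2:ℕ)^m ≤ 4^m := Nat.pow_le_pow_left (by norm_num) m
        have a3 : (4:ℕ)^m ≤ 4^(m+1) := Nat.pow_le_pow_right (by norm_num) (Nat.le_succ m)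
        omega
      calc m^(m+1) ≤ (4^(m+1))^(m+1) := Nat.pow_le_pow_left h1 _
        _ = 4^((m+1)*(m+1)) := by rw [← pow_mul]
        _ ≤ 4^n := Nat.pow_le_pow_right (by norm_num)
            (by rw [← sq]; exact le_trans (Nat.le_add_right _ _) hn)
    calc (m:ℝ)^(m+1) ≤ (4:ℝ)^n := by exact_mod_cast hnat
      _ ≤ (2*z)^n := pow_le_pow_left₀ (by norm_num) (by linarith) n
  -- (2z)^n ≤ m^(k - m)
  have hkey : (2*z)^n ≤ ((m:ℝ))^((k:ℕ) - (m:ℕ) : ℕ) := by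
    have e0 : ((m:ℝ))^((k:ℕ) - (m:ℕ) : ℕ) = (m:ℝ) ^ (((k:ℝ) - (m:ℝ)) : ℝ) := by
      rw [← Real.rpow_natCast (m:ℝ) (k - m), Nat.cast_sub hmk]
    rw [e0]
    have e1 : (m:ℝ) ^ ((n:ℝ)*β - 1 - (m:ℝ)) ≤ (m:ℝ) ^ (((k:ℝ) - (m:ℝ)) : ℝ) :=
      Real.rpow_le_rpow_of_exponent_le hm1 (by linarith)
    refine le_trans ?_ e1
    have e2 : (m:ℝ) ^ ((n:ℝ)*β - 1 - (m:ℝ)) = (m:ℝ) ^ ((n:ℝ)*β) / (m:ℝ)^(m+1:ℕ) := by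
      rw [← Real.rpow_natCast (m:ℝ) (m+1), ← Real.rpow_sub hm0]
      push_cast
      ring_nf
    rw [e2]
    have e3 : ((2*z)^n) * ((2*z)^n) ≤ (m:ℝ) ^ ((n:ℝ)*β) := by
      have : (m:ℝ) ^ ((n:ℝ)*β) = ((m:ℝ)^β)^n := by
        rw [mul_comm, Real.rpow_mul hm0.le, Real.rpow_natCast]
      rw [this]
      calc ((2*z)^n) * ((2*z)^n) = ((2*z)^(2:ℕ))^n := by
            rw [← pow_add, ← pow_mul]; congr 1; omega
        _ ≤ ((m:ℝ)^β)^n := pow_le_pow_left₀ (by positivity) hmb n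
    rw [le_div_iff₀ (by positivity)]
    calc (2*z)^n * (m:ℝ)^(m+1:ℕ) ≤ (2*z)^n * (2*z)^n :=
          mul_le_mul_of_nonneg_left hmm (by positivity)
      _ ≤ _ := e3
  -- conclude
  have hfac : (2*z)^n ≤ (k.factorial : ℝ) := by
    refine le_trans hkey ?_
    exact_mod_cast pow_sub_le_factorial hmk
  have hzn : (0:ℝ) ≤ z^n := by positivity
  calc z^n / (k.factorial : ℝ) ≤ z^n / (2*z)^n :=
        div_le_div_of_nonneg_left hzn (by positivity) hfac
    _ = (1/2)^n := by
        have hz0 : z ≠ 0 := by linarith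
        rw [← div_pow]
        congr 1
        field_simp

lemma gamma_ml_pos {β : ℝ} (hβ : 0 < β) (n : ℕ) : 0 < Real.Gamma ((n:ℝ) * β + 1) :=
  Real.Gamma_pos_of_pos (by positivity)

lemma summable_aux {β : ℝ} (hβ : 0 < β) {z : ℝ} (hz : 2 ≤ z) :
    Summable (fun n : ℕ => z ^ n / ((Nat.floor ((n:ℝ)*β)).factorial : ℝ)) := by
  set N := (⌈(2*z)^(2/β)⌉₊ + 1)^2 + ⌈((⌈(2*z)^(2/β)⌉₊:ℝ) + 1)/β⌉₊ with hN
  rw [← summable_nat_add_iff N]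
  have hsum : Summable (fun n : ℕ => ((1:ℝ)/2)^(n+N)) := by
    simpa [pow_add] using summable_geometric_two.mul_right (((1:ℝ)/2)^N)
  refine Summable.of_nonneg_of_le (fun n => by positivity) (fun n => ?_) hsum
  exact term_bound hβ hz (n+N) (by omega)

lemma summable_ml {β : ℝ} (hβ : 0 < β) {z : ℝ} (hz : 0 ≤ z) :
    Summable (fun n : ℕ => z ^ n / Real.Gamma ((n:ℝ)*β + 1)) := by
  have key := (summable_aux hβ (by linarith : (2:ℝ) ≤ z + 2)).mul_left 2
  refine Summable.of_nonneg_of_le (fun n => by positivity) (fun n => ?_) key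
  have h1 : z^n / Real.Gamma ((n:ℝ)*β + 1)
      ≤ (z+2)^n / (((Nat.floor ((n:ℝ)*β)).factorial : ℝ) / 2) := by
    apply div_le_div₀ (by positivity) (pow_le_pow_left₀ hz (by linarith) n)
      (by positivity) (floor_factorial_le_gamma hβ n)
  refine h1.trans (le_of_eq ?_)
  have : ((Nat.floor ((n:ℝ)*β)).factorial : ℝ) ≠ 0 := by positivity
  field_simp

lemma ml_ge_term {β : ℝ} (hβ : 0 < β) {z : ℝ} (hz : 0 ≤ z) (n : ℕ) :
    z ^ n / Real.Gamma ((n:ℝ) * β + 1) ≤ mittagLeffler β z :=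
  Summable.le_tsum (summable_ml hβ hz) n (fun j _ => by positivity)

lemma one_le_ml {β : ℝ} (hβ : 0 < β) {z : ℝ} (hz : 0 ≤ z) : 1 ≤ mittagLeffler β z := by
  have := ml_ge_term hβ hz 0
  simpa [Real.Gamma_one] using this

lemma ml_upper {β : ℝ} (hβ : 0 < β) {z : ℝ} (hz : 2 ≤ z) :
    mittagLeffler β z ≤
      2 * ((((⌈(2*z)^(2/β)⌉₊ + 1)^2 + ⌈((⌈(2*z)^(2/β)⌉₊:ℝ) + 1)/β⌉₊ : ℕ)) : ℝ)
        * z ^ (((⌈(2*z)^(2/β)⌉₊ + 1)^2 + ⌈((⌈(2*z)^(2/β)⌉₊:ℝ) + 1)/β⌉₊ : ℕ)) + 4 := by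
  set N := (⌈(2*z)^(2/β)⌉₊ + 1)^2 + ⌈((⌈(2*z)^(2/β)⌉₊:ℝ) + 1)/β⌉₊ with hN
  set g : ℕ → ℝ := fun n => 2 * (z ^ n / ((Nat.floor ((n:ℝ)*β)).factorial : ℝ)) with hg
  have hgsum : Summable g := (summable_aux hβ hz).mul_left 2
  have h1 : mittagLeffler β z ≤ ∑' n, g n := by
    apply Summable.tsum_le_tsum _ (summable_ml hβ (by linarith)) hgsum
    intro n
    have h2 : z^n / Real.Gamma ((n:ℝ)*β + 1)
        ≤ z^n / (((Nat.floor ((n:ℝ)*β)).factorial : ℝ) / 2) :=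
      div_le_div_of_nonneg_left (by positivity) (by positivity)
        (floor_factorial_le_gamma hβ n)
    refine h2.trans (le_of_eq ?_)
    have : ((Nat.floor ((n:ℝ)*β)).factorial : ℝ) ≠ 0 := by positivity
    rw [hg]; field_simp
  have hsplit : (∑ i ∈ Finset.range N, g i) + (∑' i, g (i + N)) = ∑' n, g n :=
    Summable.sum_add_tsum_nat_add N hgsum
  have hhead : (∑ i ∈ Finset.range N, g i) ≤ (N:ℝ) * (2 * z ^ N) := by
    have : ∀ i ∈ Finset.range N, g i ≤ 2 * z ^ N := by
      intro i hi
      rw [hg]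
      have hf1 : (1:ℝ) ≤ ((Nat.floor ((i:ℝ)*β)).factorial : ℝ) := by
        exact_mod_cast Nat.one_le_iff_ne_zero.2 (Nat.factorial_ne_zero _)
      have : z ^ i / ((Nat.floor ((i:ℝ)*β)).factorial : ℝ) ≤ z ^ i := by
        apply div_le_self (by positivity) hf1
      have hzi : z ^ i ≤ z ^ N :=
        pow_le_pow_right₀ (by linarith) (le_of_lt (Finset.mem_range.1 hi))
      linarith
    calc (∑ i ∈ Finset.range N, g i) ≤ (Finset.range N).card • (2 * z ^ N) :=
          Finset.sum_le_card_nsmul _ _ _ this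
      _ = (N:ℝ) * (2 * z ^ N) := by simp [nsmul_eq_mul]
  have htail : (∑' i, g (i + N)) ≤ 4 := by
    have hs1 : Summable (fun i : ℕ => g (i + N)) := (summable_nat_add_iff N).2 hgsum
    have hs2 : Summable (fun i : ℕ => 2 * ((1:ℝ)/2)^i) :=
      summable_geometric_two.mul_left 2
    have hle : ∀ i : ℕ, g (i + N) ≤ 2 * ((1:ℝ)/2)^i := by
      intro i
      rw [hg]
      have h3 : z ^ (i+N) / ((Nat.floor (((i+N:ℕ):ℝ)*β)).factorial : ℝ) ≤ (1/2)^(i+N) :=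
        term_bound hβ hz (i+N) (by omega)
      have h4 : ((1:ℝ)/2)^(i+N) ≤ (1/2)^i :=
        pow_le_pow_of_le_one (by norm_num) (by norm_num) (by omega)
      have := h3.trans h4
      push_cast at this ⊢
      linarith
    calc (∑' i, g (i + N)) ≤ ∑' i, 2 * ((1:ℝ)/2)^i := Summable.tsum_le_tsum hle hs1 hs2
      _ = 2 * 2 := by rw [tsum_mul_left, tsum_geometric_two]
      _ = 4 := by norm_num
  calc mittagLeffler β z ≤ ∑' n, g n := h1
    _ = (∑ i ∈ Finset.range N, g i) + (∑' i, g (i + N)) := hsplit.symm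
    _ ≤ (N:ℝ) * (2 * z ^ N) + 4 := by linarith
    _ = 2 * (N:ℝ) * z ^ N + 4 := by ring

lemma lower_key {β t : ℝ} (hβ : 0 < β) (ht : 0 < t) {c : ℝ} (hc0 : 0 < c) (hc : c < 1/β) :
    ∀ᶠ θ : ℝ in atTop, Real.exp (θ ^ c) ≤ mittagLeffler β (θ * t) := by
  set D : ℝ := (2 + |Real.log t|)/β with hD
  have hD0 : 0 ≤ D := by positivity
  set C : ℝ := 2*β*Real.exp D with hCdef
  have hC0 : 0 < C := by positivity
  set a : ℝ := c * β with ha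
  have ha0 : 0 < a := by positivity
  have ha1 : a < 1 := by
    have : c < 1/β := hc
    calc a = c * β := rfl
      _ < (1/β) * β := by exact mul_lt_mul_of_pos_right hc hβ
      _ = 1 := by field_simp
  -- eventual facts in s
  have ev1 : ∀ᶠ s : ℝ in atTop, Real.log s ≤ s / C := by
    have h := (Real.isLittleO_log_id_atTop.def (by positivity : (0:ℝ) < 1/C))
    filter_upwards [h, eventually_ge_atTop (0:ℝ)] with s hs hs0
    simp only [Real.norm_eq_abs, id_eq] at hs
    calc Real.log s ≤ |Real.log s| := le_abs_self _
      _ ≤ 1/C * |s| := hs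
      _ = s / C := by rw [abs_of_nonneg hs0]; ring
  have ev2 : ∀ᶠ s : ℝ in atTop, s ^ a ≤ s / C := by
    have h2 : Tendsto (fun s : ℝ => s ^ (-(1-a))) atTop (nhds 0) :=
      tendsto_rpow_neg_atTop (by linarith)
    have h3 : ∀ᶠ s : ℝ in atTop, s ^ (-(1-a)) ≤ 1/C := by
      filter_upwards [h2.eventually (eventually_le_nhds (by positivity : (0:ℝ) < 1/C))]
        with s hs using hs
    filter_upwards [h3, eventually_ge_atTop (1:ℝ)] with s hs hs1
    have hs0 : (0:ℝ) < s := by linarith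
    have e : s ^ a = s ^ (-(1-a)) * s := by
      rw [← Real.rpow_add_one (ne_of_gt hs0) (-(1-a))]
      congr 1
      ring
    rw [e]
    calc s ^ (-(1-a)) * s ≤ 1/C * s := by
          apply mul_le_mul_of_nonneg_right hs (by linarith)
      _ = s / C := by ring
  have hT : Tendsto (fun θ : ℝ => θ ^ (1/β)) atTop atTop :=
    tendsto_rpow_atTop (by positivity)
  filter_upwards [hT.eventually ev1, hT.eventually ev2,
    hT.eventually (eventually_ge_atTop (C*(β+1)/β)),
    hT.eventually (eventually_ge_atTop (1:ℝ)),
    eventually_ge_atTop (1:ℝ)] with θ hv1 hv2 hv3 hv4 hθ1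
  set s : ℝ := θ ^ (1/β) with hs
  have hθ0 : (0:ℝ) < θ := by linarith
  have hs0 : (0:ℝ) < s := Real.rpow_pos_of_pos hθ0 _
  set z : ℝ := θ * t with hz
  have hz0 : (0:ℝ) < z := by positivity
  set n : ℕ := ⌈s / C⌉₊ with hn
  have hnl : s / C ≤ (n:ℝ) := Nat.le_ceil _
  have hnu : (n:ℝ) ≤ s / C + 1 := (Nat.ceil_lt_add_one (by positivity)).le
  have hsC : C * (β+1) / β ≤ s := hv3
  have hβs : β + 1 ≤ β * s / C := by
    have h := mul_le_mul_of_nonneg_right hsC (show (0:ℝ) ≤ β / C by positivity)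
    have e1 : C * (β+1) / β * (β/C) = β + 1 := by field_simp
    have e2 : s * (β/C) = β * s / C := by ring
    linarith
  have hnβ1 : 1 ≤ (n:ℝ) * β := by
    have h1 : β * (s/C) ≤ (n:ℝ) * β := by
      rw [mul_comm]
      exact mul_le_mul_of_nonneg_right hnl hβ.le
    have : β * s / C = β * (s/C) := by ring
    nlinarith
  -- Gamma upper bound
  have hΓ : Real.Gamma ((n:ℝ)*β + 1) ≤ ((n:ℝ)*β+1) ^ ((n:ℝ)*β+1) :=
    gamma_le_rpow hnβ1
  have hΓpos := gamma_ml_pos hβ n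
  -- logs
  have hlogθ : Real.log θ = β * Real.log s := by
    rw [hs, Real.log_rpow hθ0]
    field_simp
  have hlogz : Real.log z = β * Real.log s + Real.log t := by
    rw [hz, Real.log_mul (ne_of_gt hθ0) (ne_of_gt ht), hlogθ]
  -- bound on nβ+1
  have hb1 : (n:ℝ)*β + 1 ≤ 2*β/C * s := by
    have h1 : (n:ℝ)*β ≤ (s/C + 1) * β := mul_le_mul_of_nonneg_right hnu hβ.le
    have h2 : (s/C+1)*β = β*s/C + β := by ring
    have h3 : 2*β/C*s = 2*(β*s/C) := by ring
    linarith
  have h2βC : 2*β/C = Real.exp (-D) := by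
    rw [hCdef, Real.exp_neg]
    field_simp
  have hb2 : Real.log ((n:ℝ)*β+1) ≤ Real.log s - D := by
    calc Real.log ((n:ℝ)*β+1) ≤ Real.log (2*β/C * s) :=
          Real.log_le_log (by linarith) hb1
      _ = Real.log (2*β/C) + Real.log s := by
          rw [Real.log_mul (by positivity) (ne_of_gt hs0)]
      _ = Real.log s - D := by rw [h2βC, Real.log_exp]; ring
  -- key inequality on the exponent
  have hβD : β * D = 2 + |Real.log t| := by
    rw [hD]
    field_simp
  have habs : -|Real.log t| ≤ Real.log t := neg_abs_le _
  have hn0 : (0:ℝ) ≤ (n:ℝ) := Nat.cast_nonneg n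
  have hkey : s ^ a ≤ (n:ℝ) * Real.log z - ((n:ℝ)*β+1) * Real.log ((n:ℝ)*β+1) := by
    have e4 : ((n:ℝ)*β+1) * Real.log ((n:ℝ)*β+1) ≤ ((n:ℝ)*β+1) * (Real.log s - D) :=
      mul_le_mul_of_nonneg_left hb2 (by linarith)
    have e5 : (n:ℝ) * Real.log z - ((n:ℝ)*β+1) * (Real.log s - D)
        = (n:ℝ) * (Real.log t + β * D) - Real.log s + D := by
      rw [hlogz]; ring
    have e6 : 2 * (n:ℝ) ≤ (n:ℝ) * (Real.log t + β * D) := by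
      rw [hβD]
      nlinarith [mul_nonneg hn0 (show (0:ℝ) ≤ Real.log t + |Real.log t| by
        linarith [neg_abs_le (Real.log t)])]
    have e7 : 2 * (s/C) ≤ 2 * (n:ℝ) := by linarith
    have e8 : Real.log s ≤ s / C := hv1
    have e9 : s ^ a ≤ s / C := hv2
    nlinarith [e4, e5, e6, e7, e8, e9, hD0]
  -- assemble
  have hterm : Real.exp (θ ^ c) ≤ z ^ n / Real.Gamma ((n:ℝ)*β + 1) := by
    have hθc : θ ^ c = s ^ a := by
      rw [hs, ← Real.rpow_mul hθ0.le]
      congr 1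
      rw [ha]
      field_simp
    have hzn : z ^ n = Real.exp ((n:ℝ) * Real.log z) := by
      rw [← Real.log_pow, Real.exp_log (by positivity)]
    have hden : ((n:ℝ)*β+1) ^ ((n:ℝ)*β+1) = Real.exp (Real.log ((n:ℝ)*β+1) * ((n:ℝ)*β+1)) :=
      Real.rpow_def_of_pos (by linarith) _
    have h10 : z ^ n / ((n:ℝ)*β+1) ^ ((n:ℝ)*β+1)
        = Real.exp ((n:ℝ) * Real.log z - ((n:ℝ)*β+1) * Real.log ((n:ℝ)*β+1)) := by
      rw [hzn, hden, ← Real.exp_sub]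
      congr 1
      ring
    calc Real.exp (θ ^ c) ≤ Real.exp ((n:ℝ) * Real.log z - ((n:ℝ)*β+1) * Real.log ((n:ℝ)*β+1)) := by
          rw [hθc]; exact Real.exp_le_exp.2 hkey
      _ = z ^ n / ((n:ℝ)*β+1) ^ ((n:ℝ)*β+1) := h10.symm
      _ ≤ z ^ n / Real.Gamma ((n:ℝ)*β + 1) :=
          div_le_div_of_nonneg_left (by positivity) hΓpos hΓ
  exact hterm.trans (ml_ge_term hβ hz0.le n)

lemma upper_key {β t : ℝ} (hβ : 0 < β) (ht : 0 < t) :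
    ∀ᶠ θ : ℝ in atTop, mittagLeffler β (θ * t) ≤ Real.exp (θ ^ (8/β + 3)) := by
  filter_upwards [eventually_ge_atTop (1:ℝ), eventually_ge_atTop (2*t),
    eventually_ge_atTop (2/t), eventually_ge_atTop (80 + 24/β)] with θ hθ1 hθ2t hθ2t' hθ80
  have hθ0 : (0:ℝ) < θ := by linarith
  set z : ℝ := θ * t with hzdef
  have hz2 : (2:ℝ) ≤ z := by
    rw [hzdef]
    calc (2:ℝ) = (2/t) * t := by field_simp
      _ ≤ θ * t := mul_le_mul_of_nonneg_right hθ2t' ht.le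
  have hz0 : (0:ℝ) < z := by linarith
  set A : ℝ := 2/β with hA
  have hA0 : (0:ℝ) < A := by positivity
  set m : ℕ := ⌈(2*z)^(2/β)⌉₊ with hmdef
  set N : ℕ := (m + 1)^2 + ⌈((m:ℝ) + 1)/β⌉₊ with hNdef
  have hml := ml_upper hβ hz2
  rw [← hmdef, ← hNdef] at hml
  -- 2z ≤ θ^2
  have hθ2 : 2*z ≤ θ ^ (2:ℝ) := by
    rw [show ((2:ℝ) = ((2:ℕ):ℝ)) by norm_num, Real.rpow_natCast]
    have : 2*t*θ ≤ θ*θ := mul_le_mul_of_nonneg_right hθ2t hθ0.le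
    calc 2*z = 2*t*θ := by rw [hzdef]; ring
      _ ≤ θ*θ := this
      _ = θ^2 := by ring
  have hone : ∀ x : ℝ, 0 ≤ x → 1 ≤ θ ^ x := fun x hx => Real.one_le_rpow hθ1 hx
  -- m ≤ θ^(2A) + 1
  have hm : (m:ℝ) ≤ θ ^ (2*A) + 1 := by
    have h1 : (m:ℝ) < (2*z)^(2/β) + 1 := Nat.ceil_lt_add_one (by positivity)
    have h2 : (2*z)^(2/β) ≤ (θ ^ (2:ℝ)) ^ A := by
      rw [← hA]
      exact Real.rpow_le_rpow (by positivity) hθ2 hA0.le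
    rw [← Real.rpow_mul hθ0.le] at h2
    linarith
  -- N ≤ (10 + 3/β) θ^(4A)
  have hrpow_mul : θ ^ (2*A) * θ ^ (2*A) = θ ^ (4*A) := by
    rw [← Real.rpow_add hθ0]
    congr 1
    ring
  have h2A4A : θ ^ (2*A) ≤ θ ^ (4*A) :=
    Real.rpow_le_rpow_of_exponent_le hθ1 (by linarith)
  have hNr : (N:ℝ) ≤ (10 + 3/β) * θ ^ (4*A) := by
    have hcast : (N:ℝ) = ((m:ℝ)+1)^2 + (⌈((m:ℝ) + 1)/β⌉₊ : ℝ) := by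
      rw [hNdef]
      push_cast
      ring
    have h3 : ((m:ℝ)+1)^2 ≤ (θ ^ (2*A) + 2)^2 := by nlinarith [hm, hone (2*A) (by positivity)]
    have h4 : (θ ^ (2*A) + 2)^2 ≤ 9 * θ ^ (4*A) := by
      have h1A : 1 ≤ θ ^ (2*A) := hone (2*A) (by positivity)
      nlinarith [hrpow_mul]
    have h5 : (⌈((m:ℝ) + 1)/β⌉₊ : ℝ) ≤ ((m:ℝ)+1)/β + 1 :=
      (Nat.ceil_lt_add_one (by positivity)).le
    have h6 : ((m:ℝ)+1)/β ≤ (θ ^ (2*A) + 2)/β := by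
      rw [div_le_div_iff_of_pos_right hβ]
      linarith
    have h7 : (θ ^ (2*A) + 2)/β ≤ 3 * θ ^ (4*A) / β := by
      rw [div_le_div_iff_of_pos_right hβ]
      have h1A : 1 ≤ θ ^ (2*A) := hone (2*A) (by positivity)
      linarith
    have h8 : (1:ℝ) ≤ θ ^ (4*A) := hone (4*A) (by positivity)
    have : (N:ℝ) ≤ 9 * θ ^ (4*A) + 3 * θ ^ (4*A)/β + 1 := by linarith
    have e : (10 + 3/β) * θ ^ (4*A) = 9 * θ ^ (4*A) + 3 * θ ^ (4*A)/β + θ ^ (4*A) := by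
      field_simp
      ring
    linarith
  -- 2 N z^N + 4 ≤ exp (8 N z)
  have hN1 : (1:ℝ) ≤ (N:ℝ) := by
    have : 1 ≤ N := by
      rw [hNdef]
      have : 1 ≤ (m+1)^2 := Nat.one_le_pow _ _ (by omega)
      omega
    exact_mod_cast this
  have hz1 : (1:ℝ) ≤ z := by linarith
  have hzN : (1:ℝ) ≤ z ^ N := one_le_pow₀ hz1
  have hNzN : (1:ℝ) ≤ (N:ℝ) * z ^ N := by nlinarith
  have hNz : (1:ℝ) ≤ (N:ℝ) * z := by nlinarith
  have hexp : 2 * (N:ℝ) * z ^ N + 4 ≤ Real.exp (8 * (N:ℝ) * z) := by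
    have hpos : (0:ℝ) < 6 * (N:ℝ) * z ^ N := by positivity
    have hlog : Real.log (6 * (N:ℝ) * z ^ N) ≤ 8 * (N:ℝ) * z := by
      rw [Real.log_mul (by positivity) (by positivity),
        Real.log_mul (by norm_num) (by positivity), Real.log_pow]
      have l6 : Real.log 6 ≤ 5 := by
        have := Real.log_le_sub_one_of_pos (show (0:ℝ) < 6 by norm_num)
        linarith
      have lN : Real.log (N:ℝ) ≤ (N:ℝ) := by
        have := Real.log_le_sub_one_of_pos (show (0:ℝ) < (N:ℝ) by linarith)
        linarith
      have lz : Real.log z ≤ z := by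
        have := Real.log_le_sub_one_of_pos hz0
        linarith
      have lz0 : 0 ≤ Real.log z := Real.log_nonneg hz1
      have hNz2 : (N:ℝ) * Real.log z ≤ (N:ℝ) * z :=
        mul_le_mul_of_nonneg_left lz (by linarith)
      nlinarith
    calc 2 * (N:ℝ) * z ^ N + 4 ≤ 6 * (N:ℝ) * z ^ N := by nlinarith
      _ = Real.exp (Real.log (6 * (N:ℝ) * z ^ N)) := (Real.exp_log hpos).symm
      _ ≤ Real.exp (8 * (N:ℝ) * z) := Real.exp_le_exp.2 hlog
  -- 8 N z ≤ θ^(4A+3)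
  have h8Nz : 8 * (N:ℝ) * z ≤ θ ^ (4*A + 3) := by
    have hzθ : z ≤ θ ^ (2:ℝ) := by linarith
    have h1 : 8 * (N:ℝ) * z ≤ 8 * ((10 + 3/β) * θ ^ (4*A)) * θ ^ (2:ℝ) := by
      have hN0 : (0:ℝ) ≤ (N:ℝ) := by linarith
      have hb : (0:ℝ) ≤ (10 + 3/β) * θ ^ (4*A) := by positivity
      have hmul := mul_le_mul hNr hzθ hz0.le hb
      calc 8 * (N:ℝ) * z = 8 * ((N:ℝ) * z) := by ring
        _ ≤ 8 * ((10 + 3/β) * θ ^ (4*A) * θ ^ (2:ℝ)) := by linarith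
        _ = 8 * ((10 + 3/β) * θ ^ (4*A)) * θ ^ (2:ℝ) := by ring
    have h2 : θ ^ (4*A) * θ ^ (2:ℝ) = θ ^ (4*A + 2) := by
      rw [← Real.rpow_add hθ0]
    have h3 : 8 * ((10 + 3/β) * θ ^ (4*A)) * θ ^ (2:ℝ) = (80 + 24/β) * θ ^ (4*A+2) := by
      rw [← h2]
      ring
    have h4 : (80 + 24/β) * θ ^ (4*A+2) ≤ θ * θ ^ (4*A+2) :=
      mul_le_mul_of_nonneg_right (by linarith) (Real.rpow_pos_of_pos hθ0 _).le
    have h5 : θ * θ ^ (4*A+2) = θ ^ (4*A+3) := by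
      nth_rewrite 1 [← Real.rpow_one θ]
      rw [← Real.rpow_add hθ0]
      congr 1
      ring
    linarith
  have hfinal : θ ^ (4*A+3) = θ ^ (8/β + 3) := by
    congr 1
    rw [hA]
    ring
  calc mittagLeffler β z ≤ 2 * (N:ℝ) * z ^ N + 4 := hml
    _ ≤ Real.exp (8 * (N:ℝ) * z) := hexp
    _ ≤ Real.exp (θ ^ (4*A+3)) := Real.exp_le_exp.2 h8Nz
    _ = Real.exp (θ ^ (8/β+3)) := by rw [hfinal]

theorem mittagLeffler_liminf (β t : ℝ) (hβ : 0 < β) (ht : 0 < t) :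
    1 / β ≤ Filter.liminf
      (fun θ : ℝ => Real.log (Real.log (mittagLeffler β (θ * t))) / Real.log θ)
      Filter.atTop := by
  set u : ℝ → ℝ := fun θ => Real.log (Real.log (mittagLeffler β (θ * t))) / Real.log θ
    with hu
  have hhalf : 0 < 1/(2*β) := by positivity
  have hhalflt : 1/(2*β) < 1/β := by
    rw [div_lt_div_iff₀ (by positivity) hβ]
    linarith
  -- lower estimate: for any c ∈ (0, 1/β), eventually c ≤ u θ
  have hlow : ∀ c : ℝ, 0 < c → c < 1/β → ∀ᶠ θ : ℝ in atTop, c ≤ u θ := by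
    intro c hc0 hc
    filter_upwards [lower_key hβ ht hc0 hc, eventually_ge_atTop (2:ℝ)] with θ hE hθ2
    have hθ0 : (0:ℝ) < θ := by linarith
    have hθc : 0 < θ ^ c := Real.rpow_pos_of_pos hθ0 c
    have hlogθ : 0 < Real.log θ := Real.log_pos (by linarith)
    have h1 : θ ^ c ≤ Real.log (mittagLeffler β (θ*t)) := by
      have := Real.log_le_log (Real.exp_pos _) hE
      rwa [Real.log_exp] at this
    have h2 : c * Real.log θ ≤ Real.log (Real.log (mittagLeffler β (θ*t))) := by
      have := Real.log_le_log hθc h1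
      rwa [Real.log_rpow hθ0] at this
    rw [hu]
    simp only []
    rw [le_div_iff₀ hlogθ]
    linarith
  -- upper estimate : eventually u θ ≤ 8/β + 3
  have hupp : ∀ᶠ θ : ℝ in atTop, u θ ≤ 8/β + 3 := by
    filter_upwards [upper_key hβ ht, lower_key hβ ht hhalf hhalflt,
      eventually_ge_atTop (2:ℝ)] with θ hE hEl hθ2
    have hθ0 : (0:ℝ) < θ := by linarith
    have hlogθ : 0 < Real.log θ := Real.log_pos (by linarith)
    have hEpos : 0 < mittagLeffler β (θ*t) := lt_of_lt_of_le (Real.exp_pos _) hEl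
    have h1 : Real.log (mittagLeffler β (θ*t)) ≤ θ ^ (8/β+3) := by
      have := Real.log_le_log hEpos hE
      rwa [Real.log_exp] at this
    have h0 : 0 < Real.log (mittagLeffler β (θ*t)) := by
      have := Real.log_le_log (Real.exp_pos _) hEl
      rw [Real.log_exp] at this
      exact lt_of_lt_of_le (Real.rpow_pos_of_pos hθ0 _) this
    have h2 : Real.log (Real.log (mittagLeffler β (θ*t))) ≤ (8/β+3) * Real.log θ := by
      have := Real.log_le_log h0 h1
      rwa [Real.log_rpow hθ0] at this
    rw [hu]
    simp only []
    rw [div_le_iff₀ hlogθ]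
    linarith
  have hcob : IsCoboundedUnder (· ≥ ·) atTop u :=
    isCoboundedUnder_ge_of_eventually_le atTop hupp
  apply le_of_forall_lt
  intro c hc
  obtain ⟨c', hcc', hc'⟩ := exists_between hc
  have hc''0 : 0 < max c' (1/(2*β)) := lt_of_lt_of_le hhalf (le_max_right _ _)
  have hc''lt : max c' (1/(2*β)) < 1/β := max_lt hc' hhalflt
  have hle : max c' (1/(2*β)) ≤ liminf u atTop :=
    le_liminf_of_le hcob (hlow _ hc''0 hc''lt)
  exact lt_of_lt_of_le (lt_of_lt_of_le hcc' (le_max_left _ _)) hle
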